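/- If κ is a subtle cardinal, then κ is a strong limit cardinal (hence, being also regular, κ is strongly inaccessible). -/

import Mathlib

/-- `C` is a club (closed unbounded set) in the ordinal `o`:
`C ⊆ o`, `C` is closed under limit points `< o`, and `C` is unbounded in `o`. -/
def IsClubIn (o : Ordinal.{0}) (C : Set Ordinal.{0}) : Prop :=
  C ⊆ Set.Iio o ∧
  (∀ δ < o, (∃ β ∈ C, β < δ) → (∀ β < δ, ∃ γ ∈ C, β < γ ∧ γ < δ) → δ ∈ C) ∧
  (∀ β < o, ∃ γ ∈ C, β < γ)

/-- A cardinal `κ` is subtle if for every club `C ⊆ κ` and every sequence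
`⟨A_α : α ∈ C⟩` with `A_α ⊆ α` for all `α ∈ C`, there are `α < β` in `C` with
`A_α = A_β ∩ α`. -/
def Subtle (κ : Cardinal.{0}) : Prop :=
  ∀ C : Set Ordinal, IsClubIn κ.ord C →
    ∀ A : Ordinal → Set Ordinal, (∀ α ∈ C, A α ⊆ Set.Iio α) →
      ∃ α ∈ C, ∃ β ∈ C, α < β ∧ A α = A β ∩ Set.Iio α

open Cardinal Set in
lemma subtle_isStrongLimit (κ : Cardinal.{0}) (hκ : Cardinal.aleph0 < κ) (h : Subtle κ) :
    κ.IsStrongLimit := by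
  have hlim : Order.IsSuccLimit κ.ord := Cardinal.isSuccLimit_ord hκ.le
  refine ⟨(aleph0_pos.trans hκ).ne', fun μ hμ => ?_⟩
  by_contra hle
  push_neg at hle
  set ν := μ.ord with hνdef
  have hν : ν < κ.ord := Cardinal.ord_lt_ord.2 hμ
  -- get an embedding from Iio κ.ord into Set (Iio ν)
  have hcard : #(Iio κ.ord) ≤ #(Set (Iio ν)) := by
    rw [Cardinal.mk_set, Ordinal.mk_Iio_ordinal, Ordinal.mk_Iio_ordinal,
      Cardinal.card_ord, Cardinal.card_ord, ← Cardinal.lift_two_power]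
    exact Cardinal.lift_le.2 hle
  obtain ⟨e⟩ := hcard
  classical
  set A : Ordinal → Set Ordinal := fun α =>
    if hα : α < κ.ord then {γ | ∃ hγ : γ ∈ Iio ν, (⟨γ, hγ⟩ : Iio ν) ∈ e ⟨α, hα⟩} else ∅ with hA
  have hAsub : ∀ α, α < κ.ord → A α ⊆ Iio ν := by
    intro α hα γ hγ
    rw [hA] at hγ; simp only [dif_pos hα] at hγ
    exact hγ.1
  have hAinj : ∀ α β, (hα : α < κ.ord) → (hβ : β < κ.ord) → A α = A β → α = β := by
    intro α β hα hβ hAB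
    have : e ⟨α, hα⟩ = e ⟨β, hβ⟩ := by
      ext ⟨γ, hγ⟩
      have h1 : (⟨γ, hγ⟩ : Iio ν) ∈ e ⟨α, hα⟩ ↔ γ ∈ A α := by
        rw [hA]; simp only [dif_pos hα, mem_setOf_eq]
        exact ⟨fun hh => ⟨hγ, hh⟩, fun ⟨hγ', hh⟩ => hh⟩
      have h2 : (⟨γ, hγ⟩ : Iio ν) ∈ e ⟨β, hβ⟩ ↔ γ ∈ A β := by
        rw [hA]; simp only [dif_pos hβ, mem_setOf_eq]
        exact ⟨fun hh => ⟨hγ, hh⟩, fun ⟨hγ', hh⟩ => hh⟩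
      rw [h1, h2, hAB]
    have := e.injective this
    exact congrArg Subtype.val this
  -- the club
  set C : Set Ordinal := {α | ν < α ∧ α < κ.ord} with hC
  have hclub : IsClubIn κ.ord C := by
    refine ⟨fun α hα => hα.2, ?_, ?_⟩
    · rintro δ hδ ⟨β, hβC, hβδ⟩ _
      exact ⟨hβC.1.trans hβδ, hδ⟩
    · intro β hβ
      refine ⟨max β ν + 1, ⟨?_, ?_⟩, ?_⟩
      · exact lt_of_le_of_lt (le_max_right β ν) (lt_add_one _)
      · rw [← Order.succ_eq_add_one]; exact hlim.succ_lt (max_lt hβ hν)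
      · exact lt_of_le_of_lt (le_max_left β ν) (lt_add_one _)
  obtain ⟨α, hαC, β, hβC, hαβ, hAeq⟩ := h C hclub A (by
    intro α hαC γ hγ
    exact lt_trans (hAsub α hαC.2 hγ) hαC.1)
  have hsub : A β ⊆ Iio α := fun γ hγ => lt_trans (hAsub β hβC.2 hγ) hαC.1
  have : A α = A β := by rw [hAeq, inter_eq_self_of_subset_left hsub]
  exact absurd (hAinj α β hαC.2 hβC.2 this) hαβ.ne

open Cardinal Set Ordinal in
lemma subtle_isRegular (κ : Cardinal.{0}) (hκ : Cardinal.aleph0 < κ) (h : Subtle κ) :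
    κ.IsRegular := by
  classical
  have hlim : Order.IsSuccLimit κ.ord := Cardinal.isSuccLimit_ord hκ.le
  refine ⟨hκ.le, ?_⟩
  by_contra hreg
  push_neg at hreg
  set lam : Ordinal := κ.ord.cof.ord with hlamdef
  have hlamlt : lam < κ.ord := Cardinal.ord_lt_ord.2 hreg
  obtain ⟨f, hf⟩ := Ordinal.exists_fundamental_sequence κ.ord
  have hfseq : lam ≤ κ.ord.cof.ord := hf.1
  set g : Ordinal → Ordinal := fun ξ => if hξ : ξ < lam then f ξ hξ else 0 with hg
  have hgmono : ∀ {i j : Ordinal}, i < lam → j < lam → i < j → g i < g j := by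
    intro i j hi hj hij
    rw [hg]; simp only [dif_pos hi, dif_pos hj]
    exact hf.2.1 hi hj hij
  have hgmono' : ∀ {i j : Ordinal}, i < lam → j < lam → i ≤ j → g i ≤ g j := by
    intro i j hi hj hij
    rcases eq_or_lt_of_le hij with rfl | hlt
    · exact le_rfl
    · exact (hgmono hi hj hlt).le
  have hglt : ∀ {ξ}, ξ < lam → g ξ < κ.ord := by
    intro ξ hξ
    rw [hg]; simp only [dif_pos hξ]
    rw [← hf.2.2]
    exact Ordinal.lt_blsub _ _ _
  have hcof : ∀ β < κ.ord, ∃ ξ, ξ < lam ∧ β ≤ g ξ := by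
    intro β hβ
    rw [← hf.2.2] at hβ
    obtain ⟨i, hi, hle⟩ := Ordinal.lt_blsub_iff.1 hβ
    refine ⟨i, hi, ?_⟩
    rw [hg]; simpa only [dif_pos (show i < lam from hi)] using hle
  -- the bound for codes
  set mu : Ordinal := lam + lam with hmu
  have hmult : mu < κ.ord := by
    rw [Cardinal.lt_ord, hmu, Ordinal.card_add, hlamdef, Cardinal.card_ord]
    have : κ.ord.cof + κ.ord.cof = κ.ord.cof := by
      exact Cardinal.add_eq_self (Ordinal.aleph0_le_cof.2 hlim)
    rw [this]; exact hreg
  -- codes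
  have hne : ∀ α < κ.ord, {ξ | ξ < lam ∧ α ≤ g ξ}.Nonempty := by
    intro α hα
    obtain ⟨ξ, h1, h2⟩ := hcof α hα
    exact ⟨ξ, h1, h2⟩
  set xi : Ordinal → Ordinal := fun α => sInf {ξ | ξ < lam ∧ α ≤ g ξ} with hxi
  have hximem : ∀ α < κ.ord, xi α < lam ∧ α ≤ g (xi α) := fun α hα => csInf_mem (hne α hα)
  have hxile : ∀ α, ∀ ξ, ξ < lam → α ≤ g ξ → xi α ≤ ξ := fun α ξ h1 h2 => csInf_le' ⟨h1, h2⟩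
  set InRan : Ordinal → Prop := fun α => ∃ ξ, ξ < lam ∧ g ξ = α with hIR
  set code : Ordinal → Ordinal := fun α => if InRan α then lam + xi α else xi α with hcode
  have hcodelt : ∀ α < κ.ord, code α < mu := by
    intro α hα
    rw [hcode, hmu]
    by_cases hir : InRan α
    · simp only [if_pos hir]
      exact (add_lt_add_iff_left lam).2 (hximem α hα).1
    · simp only [if_neg hir]
      exact lt_of_lt_of_le (hximem α hα).1 le_self_add
  set C : Set Ordinal := {α | mu < α ∧ α < κ.ord ∧
      (InRan α ∨ ∀ β < α, ∃ ξ, ξ < lam ∧ β < g ξ ∧ g ξ < α)} with hC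
  have hclub : IsClubIn κ.ord C := by
    refine ⟨fun α hα => hα.2.1, ?_, ?_⟩
    · rintro δ hδ ⟨β₀, hβ₀C, hβ₀δ⟩ hcl
      refine ⟨lt_trans hβ₀C.1 hβ₀δ, hδ, Or.inr ?_⟩
      intro β hβ
      obtain ⟨γ, hγC, hβγ, hγδ⟩ := hcl β hβ
      rcases hγC.2.2 with hir | hlimγ
      · obtain ⟨ξ, hξ, hgξ⟩ := hir
        exact ⟨ξ, hξ, by rw [hgξ]; exact hβγ, by rw [hgξ]; exact hγδ⟩
      · obtain ⟨ξ, hξ, h1, h2⟩ := hlimγ β hβγ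
        exact ⟨ξ, hξ, h1, h2.trans hγδ⟩
    · intro β hβ
      have hmb : max β mu + 1 < κ.ord := by rw [← Order.succ_eq_add_one]; exact hlim.succ_lt (max_lt hβ hmult)
      obtain ⟨ξ, hξ, hle⟩ := hcof _ hmb
      refine ⟨g ξ, ⟨?_, hglt hξ, Or.inl ⟨ξ, hξ, rfl⟩⟩, ?_⟩
      · exact lt_of_lt_of_le (lt_of_le_of_lt (le_max_right β mu) (lt_add_one _)) hle
      · exact lt_of_lt_of_le (lt_of_le_of_lt (le_max_left β mu) (lt_add_one _)) hle
  set A : Ordinal → Set Ordinal := fun α => {code α} with hA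
  obtain ⟨α, hαC, β, hβC, hαβ, hAeq⟩ := h C hclub A (by
    intro α hαC γ hγ
    rw [hA] at hγ; rw [mem_singleton_iff] at hγ
    rw [hγ]
    exact lt_trans (hcodelt α hαC.2.1) hαC.1)
  -- from hAeq : {code α} = {code β} ∩ Iio α, get code α = code β
  have hcβα : code β < α := lt_trans (hcodelt β hβC.2.1) hαC.1
  have hcc : code α = code β := by
    have : code β ∈ A α := by
      rw [hAeq]; exact ⟨rfl, hcβα⟩
    rw [hA, mem_singleton_iff] at this
    exact this.symm
  -- derive contradiction
  have hξα := hximem α hαC.2.1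
  have hξβ := hximem β hβC.2.1
  by_cases hirα : InRan α <;> by_cases hirβ : InRan β
  · -- both in range: impossible
    rw [hcode] at hcc; simp only [if_pos hirα, if_pos hirβ] at hcc
    have hxieq : xi α = xi β := add_left_cancel_iff.1 hcc
    obtain ⟨η, hη, hgη⟩ := hirα
    have h1 : xi α ≤ η := hxile α η hη (le_of_eq hgη.symm)
    have h2 : g (xi α) ≤ g η := hgmono' hξα.1 hη h1
    rw [hgη] at h2
    have h3 : β ≤ g (xi α) := by rw [hxieq]; exact hξβ.2
    exact absurd (h3.trans h2) (not_le.2 hαβ)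
  · rw [hcode] at hcc; simp only [if_pos hirα, if_neg hirβ] at hcc
    have : xi β < lam := hξβ.1
    have : lam + xi α < lam := hcc ▸ this
    exact absurd this (not_lt.2 le_self_add)
  · rw [hcode] at hcc; simp only [if_neg hirα, if_pos hirβ] at hcc
    have : xi α < lam := hξα.1
    rw [hcc] at this
    exact absurd this (not_lt.2 le_self_add)
  · -- both limits of the range
    rw [hcode] at hcc; simp only [if_neg hirα, if_neg hirβ] at hcc
    rcases hβC.2.2 with hir | hlimβ
    · exact absurd hir hirβ
    obtain ⟨ξ, hξ, h1, h2⟩ := hlimβ α hαβ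
    have h3 : xi α ≤ ξ := hxile α ξ hξ h1.le
    have h4 : g (xi α) ≤ g ξ := hgmono' hξα.1 hξ h3
    have h5 : β ≤ g (xi α) := by rw [hcc]; exact hξβ.2
    exact absurd (lt_of_le_of_lt (h5.trans h4) h2) (lt_irrefl β)

/-- If `κ` is a subtle (uncountable) cardinal, then `κ` is a strong limit cardinal;
hence (being also regular) `κ` is strongly inaccessible. -/
theorem stmt2 (κ : Cardinal.{0}) (hκ : Cardinal.aleph0 < κ) (h : Subtle κ) :
    κ.IsStrongLimit ∧ κ.IsInaccessible := by
  have hsl := subtle_isStrongLimit κ hκ h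
  exact ⟨hsl, hκ, (subtle_isRegular κ hκ h).le_cof_ord, hsl.isStrongPrelimit⟩
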